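/- For every z ∈ [0,∞)^d, the vector x of recursive max-linear values on 𝒟 satisfies x_i = max_{j ∈ An(i)} b_{ji} z_j for every i ∈ V; that is, B is the max-linear coefficient matrix of the recursive max-linear model. -/

import Mathlib

open scoped NNReal ENNReal Classical

namespace MaxLinearDAG

variable {d : ℕ}

/-- `p` is a directed path (with at least one edge) from `j` to `i` in the edge relation `E`. -/
def PathFrom (E : Fin d → Fin d → Prop) (j i : Fin d) (p : List (Fin d)) : Prop :=
  2 ≤ p.length ∧ p.head? = some j ∧ p.getLast? = some i ∧ List.Chain' E p

/-- The directed graph given by `E` is acyclic: no directed path from a node to itself. -/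
def Acyclic (E : Fin d → Fin d → Prop) : Prop :=
  ∀ i, ¬ ∃ p, PathFrom E i i p

/-- `j` is an ancestor of `i`: there is a path from `j` to `i`. -/
def anc (E : Fin d → Fin d → Prop) (j i : Fin d) : Prop :=
  ∃ p, PathFrom E j i p

/-- The weight of a path `p` starting at `j`: `c j j` times the product of the
edge weights along `p`. -/
noncomputable def pathWeight (c : Fin d → Fin d → ℝ≥0) (j : Fin d) (p : List (Fin d)) : ℝ≥0 :=
  c j j * ((p.zip p.tail).map fun q => c q.1 q.2).prod

/-- `b` is the max-linear coefficient matrix of the recursive ML model on `(E, c)`: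
for `j ∈ an(i)`, `b j i` is the (attained) maximum of the path weights over all paths
from `j` to `i`; `b i i = c i i`; and `b j i = 0` for `j ∉ An(i)`. -/
def IsMLMatrix (E : Fin d → Fin d → Prop) (c b : Fin d → Fin d → ℝ≥0) : Prop :=
  (∀ i, b i i = c i i) ∧
  (∀ j i, j ≠ i → ¬ anc E j i → b j i = 0) ∧
  (∀ j i p, PathFrom E j i p → pathWeight c j p ≤ b j i) ∧
  (∀ j i, anc E j i → ∃ p, PathFrom E j i p ∧ pathWeight c j p = b j i)

/-- `x` is the vector of recursive max-linear values on `(E, c)` for noise `z`: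
`x i = max (max_{k ∈ pa(i)} c k i * x k) (c i i * z i)`, empty max being `0`. -/
def IsRecML (E : Fin d → Fin d → Prop) (c : Fin d → Fin d → ℝ≥0) (z x : Fin d → ℝ≥0) : Prop :=
  ∀ i, x i = (Finset.univ.sup fun k => if E k i then c k i * x k else 0) ⊔ c i i * z i

/-- Max-times matrix product `F ⊙ G`. -/
noncomputable def mprod (F G : Fin d → Fin d → ℝ≥0) : Fin d → Fin d → ℝ≥0 :=
  fun i j => Finset.univ.sup fun k => F i k * G k j

/-- Max-times matrix power, `mpow A 0` being the identity matrix. -/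
noncomputable def mpow (A : Fin d → Fin d → ℝ≥0) : ℕ → Fin d → Fin d → ℝ≥0
  | 0 => fun i j => if i = j then 1 else 0
  | n + 1 => mprod (mpow A n) A

/-- `p` is a max-weighted path from `j` to `i`. -/
def MaxWeighted (E : Fin d → Fin d → Prop) (c b : Fin d → Fin d → ℝ≥0)
    (j i : Fin d) (p : List (Fin d)) : Prop :=
  PathFrom E j i p ∧ pathWeight c j p = b j i

/-- The lowest max-weighted ancestors of `i` in `U`: nodes `j ∈ An(i) ∩ U` such that no
max-weighted path from `j` to `i` passes through a node of `U \ {j}`. -/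
def AnLow (E : Fin d → Fin d → Prop) (c b : Fin d → Fin d → ℝ≥0)
    (U : Set (Fin d)) (i : Fin d) : Set (Fin d) :=
  {j | (anc E j i ∨ j = i) ∧ j ∈ U ∧
    ∀ p, MaxWeighted E c b j i p → ¬ ∃ u ∈ U \ {j}, u ∈ p}

/-- The highest max-weighted descendants of `i` in `U`: nodes `l ∈ De(i) ∩ U` such that no
max-weighted path from `i` to `l` passes through a node of `U \ {l}`. -/
def DeHigh (E : Fin d → Fin d → Prop) (c b : Fin d → Fin d → ℝ≥0)
    (U : Set (Fin d)) (i : Fin d) : Set (Fin d) :=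
  {l | (anc E i l ∨ l = i) ∧ l ∈ U ∧
    ∀ p, MaxWeighted E c b i l p → ¬ ∃ u ∈ U \ {l}, u ∈ p}

lemma pathFrom_edge {E : Fin d → Fin d → Prop} {j i : Fin d} (h : E j i) :
    PathFrom E j i [j, i] :=
  ⟨by simp, rfl, rfl, List.isChain_pair.mpr h⟩

lemma pathFrom_snoc {E : Fin d → Fin d → Prop} {j k i : Fin d} {p : List (Fin d)}
    (hp : PathFrom E j k p) (h : E k i) : PathFrom E j i (p ++ [i]) := by
  obtain ⟨hl, hh, hlast, hc⟩ := hp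
  have hne : p ≠ [] := by rintro rfl; simp at hl
  refine ⟨by simp; omega, ?_, List.getLast?_concat, ?_⟩
  · rw [List.head?_append_of_ne_nil _ hne]; exact hh
  · refine List.IsChain.append hc (List.isChain_singleton i) ?_
    intro a ha y hy
    rw [hlast] at ha
    simp only [Option.mem_def, Option.some_inj] at ha
    simp only [List.head?_cons, Option.mem_def, Option.some_inj] at hy
    subst ha; subst hy; exact h

lemma edgeProd_snoc (c : Fin d → Fin d → ℝ≥0) :
    ∀ (p : List (Fin d)) (k i : Fin d), p.getLast? = some k →
      (((p ++ [i]).zip (p ++ [i]).tail).map fun q => c q.1 q.2).prod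
        = ((p.zip p.tail).map fun q => c q.1 q.2).prod * c k i
  | [], k, i, h => by simp at h
  | [a], k, i, h => by
      simp only [List.getLast?_singleton, Option.some_inj] at h
      subst h; simp
  | a :: b :: t, k, i, h => by
      have ih := edgeProd_snoc c (b :: t) k i (by simpa using h)
      simp only [List.cons_append, List.zip_cons_cons, List.tail_cons, List.map_cons,
        List.prod_cons] at ih ⊢
      rw [ih, mul_assoc]

lemma pathWeight_snoc {c : Fin d → Fin d → ℝ≥0} {j : Fin d} {p : List (Fin d)} {k : Fin d}
    (i : Fin d) (h : p.getLast? = some k) :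
    pathWeight c j (p ++ [i]) = pathWeight c j p * c k i := by
  unfold pathWeight
  rw [edgeProd_snoc c p k i h, mul_assoc]

lemma anc_trans {E : Fin d → Fin d → Prop} {a k l : Fin d} :
    anc E a k → anc E k l → anc E a l := by
  rintro ⟨p, hp2, hph, hpl, hpc⟩ ⟨q, hq2, hqh, hql, hqc⟩
  rcases q with _ | ⟨a', q'⟩
  · simp at hq2
  rcases q' with _ | ⟨b, t⟩
  · simp at hq2
  simp only [List.head?_cons, Option.some_inj] at hqh
  subst hqh
  have hpne : p ≠ [] := by rintro rfl; simp at hp2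
  obtain ⟨hkb, hbt⟩ := List.isChain_cons_cons.mp hqc
  refine ⟨p ++ b :: t, ?_, ?_, ?_, ?_⟩
  · simp; omega
  · rw [List.head?_append_of_ne_nil _ hpne]; exact hph
  · rw [List.getLast?_append]
    rw [List.getLast?_cons_cons] at hql
    simp [hql]
  · refine List.IsChain.append hpc hbt ?_
    intro x hx y hy
    rw [hpl] at hx
    simp only [Option.mem_def, Option.some_inj] at hx
    simp only [List.head?_cons, Option.mem_def, Option.some_inj] at hy
    subst hx; subst hy; exact hkb

lemma pathFrom_decomp {E : Fin d → Fin d → Prop} {j i : Fin d} {p : List (Fin d)}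
    (hp : PathFrom E j i p) :
    ∃ k q, p = q ++ [i] ∧ q.getLast? = some k ∧ E k i ∧
      ((q = [j] ∧ k = j) ∨ PathFrom E j k q) := by
  obtain ⟨hl, hh, hlast, hc⟩ := hp
  obtain ⟨q, hdec⟩ : ∃ q, p = q ++ [i] :=
    ⟨p.dropLast, (List.dropLast_append_getLast? i hlast).symm⟩
  subst hdec
  have hqne : q ≠ [] := by rintro rfl; simp at hl
  obtain ⟨k, hqk⟩ : ∃ k, q.getLast? = some k :=
    ⟨q.getLast hqne, List.getLast?_eq_getLast hqne⟩
  rw [show List.Chain' E (q ++ [i]) ↔ List.IsChain E (q ++ [i]) from Iff.rfl, List.isChain_append] at hc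
  obtain ⟨hcq, -, hedge⟩ := hc
  have hki : E k i := hedge k hqk i rfl
  rw [List.head?_append_of_ne_nil _ hqne] at hh
  refine ⟨k, q, rfl, hqk, hki, ?_⟩
  rcases q with _ | ⟨a, q'⟩
  · exact absurd rfl hqne
  rcases q' with _ | ⟨b, t⟩
  · left
    simp only [List.head?_cons, Option.some_inj] at hh
    simp only [List.getLast?_singleton, Option.some_inj] at hqk
    subst hh
    exact ⟨rfl, hqk.symm⟩
  · right
    refine ⟨by simp, hh, hqk, hcq⟩

lemma step_up {E : Fin d → Fin d → Prop} {c b : Fin d → Fin d → ℝ≥0}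
    (hb : IsMLMatrix E c b) {j k i : Fin d} (hjk : anc E j k ∨ j = k) (hki : E k i) :
    anc E j i ∧ b j k * c k i ≤ b j i := by
  rcases hjk with h | rfl
  · obtain ⟨p, hp, hw⟩ := hb.2.2.2 j k h
    have hp' := pathFrom_snoc hp hki
    refine ⟨⟨_, hp'⟩, ?_⟩
    have h3 := hb.2.2.1 j i _ hp'
    rwa [pathWeight_snoc i hp.2.2.1, hw] at h3
  · have hp' := pathFrom_edge hki
    refine ⟨⟨_, hp'⟩, ?_⟩
    have h3 := hb.2.2.1 j i _ hp'
    have hw : pathWeight c j [j, i] = b j j * c j i := by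
      simp [pathWeight, hb.1 j]
    rwa [hw] at h3

/-- For every `z ∈ [0,∞)^d`, the vector `x` of recursive max-linear values on `𝒟`
satisfies `x i = max_{j ∈ An(i)} b j i * z j` for every `i ∈ V`; that is, `B` is the
max-linear coefficient matrix of the recursive max-linear model. -/
theorem stmt0 {d : ℕ} (hd : 1 ≤ d) (E : Fin d → Fin d → Prop) (hE : Acyclic E)
    (c : Fin d → Fin d → ℝ≥0) (hcd : ∀ i, 0 < c i i) (hce : ∀ k i, E k i → 0 < c k i)
    (b : Fin d → Fin d → ℝ≥0) (hb : IsMLMatrix E c b)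
    (z x : Fin d → ℝ≥0) (hx : IsRecML E c z x) :
    ∀ i, x i = Finset.univ.sup fun j => if anc E j i ∨ j = i then b j i * z j else 0 := by
  obtain ⟨hb1, hb2, hb3, hb4⟩ := hb
  haveI : IsTrans (Fin d) (anc E) := ⟨fun _ _ _ => anc_trans⟩
  haveI : IsIrrefl (Fin d) (anc E) := ⟨fun a ha => hE a ha⟩
  have hwf : WellFounded (anc E) := Finite.wellFounded_of_trans_of_irrefl _
  refine fun i => hwf.induction
    (C := fun i => x i = Finset.univ.sup fun j =>
      if anc E j i ∨ j = i then b j i * z j else 0) i ?_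
  clear i
  intro i IH
  apply le_antisymm
  · rw [hx i]
    apply sup_le
    · apply Finset.sup_le
      intro k _
      by_cases hk : E k i
      · rw [if_pos hk, IH k ⟨_, pathFrom_edge hk⟩, NNReal.mul_finset_sup]
        apply Finset.sup_le
        intro j _
        by_cases hj : anc E j k ∨ j = k
        · rw [if_pos hj]
          obtain ⟨hanc, hle⟩ := step_up ⟨hb1, hb2, hb3, hb4⟩ hj hk
          refine le_trans ?_ (Finset.le_sup (Finset.mem_univ j))
          rw [if_pos (Or.inl hanc)]
          calc c k i * (b j k * z j) = b j k * c k i * z j := by ring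
            _ ≤ b j i * z j := mul_le_mul_left hle _
        · rw [if_neg hj, mul_zero]
          exact zero_le
      · rw [if_neg hk]
        exact zero_le
    · refine le_trans ?_ (Finset.le_sup (Finset.mem_univ i))
      rw [if_pos (Or.inr rfl), hb1]
  · apply Finset.sup_le
    intro j _
    by_cases hj : anc E j i ∨ j = i
    · rw [if_pos hj]
      rcases hj with hj | rfl
      swap
      · rw [hb1 j, hx j]
        exact le_sup_right
      · obtain ⟨p, hp, hw⟩ := hb4 j i hj
        obtain ⟨k, q, rfl, hqk, hki, hq⟩ := pathFrom_decomp hp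
        have hwq : pathWeight c j (q ++ [i]) = pathWeight c j q * c k i :=
          pathWeight_snoc i hqk
        rcases hq with ⟨hq1, hq2⟩ | hq
        · -- q = [j], k = j
          subst hq1
          rw [hq2] at hki hwq
          have hbji : b j i = c j j * c j i := by
            rw [← hw, hwq]
            simp [pathWeight]
          have h1 : c j j * z j ≤ x j := by rw [hx j]; exact le_sup_right
          have h2 : c j i * x j ≤ x i := by
            rw [hx i]
            refine le_trans (le_trans ?_ (Finset.le_sup (Finset.mem_univ j))) le_sup_left
            exact le_of_eq (if_pos hki).symm
          calc b j i * z j = c j i * (c j j * z j) := by rw [hbji]; ring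
            _ ≤ c j i * x j := mul_le_mul_right h1 _
            _ ≤ x i := h2
        · have hjk : anc E j k := ⟨q, hq⟩
          have hbk : pathWeight c j q ≤ b j k := hb3 j k q hq
          have hki' : anc E k i := ⟨_, pathFrom_edge hki⟩
          have hxk : b j k * z j ≤ x k := by
            rw [IH k hki']
            refine le_trans ?_ (Finset.le_sup (Finset.mem_univ j))
            rw [if_pos (Or.inl hjk)]
          have hble : b j i ≤ b j k * c k i := by
            rw [← hw, hwq]
            exact mul_le_mul_left hbk _
          calc b j i * z j ≤ b j k * c k i * z j := mul_le_mul_left hble _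
            _ = c k i * (b j k * z j) := by ring
            _ ≤ c k i * x k := mul_le_mul_right hxk _
            _ ≤ x i := by
                rw [hx i]
                refine le_trans (le_trans ?_ (Finset.le_sup (Finset.mem_univ k))) le_sup_left
                exact le_of_eq (if_pos hki).symm
    · rw [if_neg hj]
      exact zero_le
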